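/- Let d ≥ 1 and let C be a 2d×2d real matrix with zero diagonal, all off-diagonal entries equal to ±1, Cᵀ = −C, and C·Cᵀ = (2d−1)·I (a skew-symmetric conference matrix). Then the Hermitian matrix A = I + (i/√(2d−1))·C is positive semidefinite of rank d, and whenever x₁,…,x_{2d} ∈ ℂ^d are vectors with x_j^*x_k = A_{jk} for all j,k (so each x_j ∈ Ω(d)), the 4d vectors ±x₁,…,±x_{2d} are pairwise distinct and the set X = {x₁,…,x_{2d}} ∪ {−x₁,…,−x_{2d}} is a complex spherical 𝒯-design for 𝒯 = {(k,l) ∈ ℕ×ℕ : k+l ≤ 3}, with inner product set A(X) = {i/√(2d−1), −i/√(2d−1), −1} of cardinality 3. -/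

import Mathlib

open Finset Matrix
open scoped ComplexOrder

/-- The Hermitian inner product `x^* y = ∑ i, conj (x i) * y i` on `ℂ^d`. -/
noncomputable def cInner {d : ℕ} (x y : Fin d → ℂ) : ℂ :=
  ∑ i, (starRingEnd ℂ) (x i) * y i

/-- A lower set in `ℕ × ℕ` with respect to the product order. -/
def IsLowerSet' (T : Finset (ℕ × ℕ)) : Prop :=
  ∀ kl ∈ T, ∀ mn : ℕ × ℕ, mn.1 ≤ kl.1 → mn.2 ≤ kl.2 → mn ∈ T

/-- The average over the unit sphere `Ω(d)` of the monomial
`z ↦ ∏ i, z i ^ a i * conj (z i) ^ b i`. -/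
noncomputable def monomialAvg (d : ℕ) (a b : Fin d → ℕ) : ℂ :=
  if a = b then
    ((Nat.factorial (d - 1) : ℂ) * ∏ i, (Nat.factorial (a i) : ℂ)) /
      (Nat.factorial (d + (∑ i, a i) - 1) : ℂ)
  else 0

/-- `X` is a complex spherical `T`-design: every monomial of bidegree `(k,l) ∈ T`
has the same average over `X` as over the sphere `Ω(d)`. -/
def IsDesign (d : ℕ) (X : Finset (Fin d → ℂ)) (T : Finset (ℕ × ℕ)) : Prop :=
  ∀ kl ∈ T, ∀ a b : Fin d → ℕ, (∑ i, a i) = kl.1 → (∑ i, b i) = kl.2 →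
    (∑ z ∈ X, (∏ i, (z i) ^ (a i)) * ∏ i, ((starRingEnd ℂ) (z i)) ^ (b i))
      = (X.card : ℂ) * monomialAvg d a b

/-- The Jacobi polynomial `g_{k,l}` for the complex sphere in dimension `d`. -/
noncomputable def jacobi (d k l : ℕ) (x : ℂ) : ℂ :=
  (((d + k + l - 1 : ℕ) : ℂ) / (Nat.factorial (d - 1) : ℂ)) *
    ∑ r ∈ Finset.range (min k l + 1),
      (((-1 : ℂ) ^ r * (Nat.factorial (d + k + l - r - 2) : ℂ)) /
          ((Nat.factorial r : ℂ) * (Nat.factorial (k - r) : ℂ) *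
            (Nat.factorial (l - r) : ℂ))) *
        x ^ (k - r) * ((starRingEnd ℂ) x) ^ (l - r)

open scoped Classical in
/-- The inner product set `A(X) = {x^* y : x, y ∈ X, x ≠ y}`. -/
noncomputable def innerSet {d : ℕ} (X : Finset (Fin d → ℂ)) : Finset ℂ :=
  ((X ×ˢ X).filter fun p => p.1 ≠ p.2).image fun p => cInner p.1 p.2

/-- `m_{k,l}`, the dimension of the harmonic space `Harm(k,l)` in dimension `d`. -/
def mdim (d k l : ℕ) : ℕ :=
  (d + k - 1).choose (d - 1) * (d + l - 1).choose (d - 1) -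
    (d + k - 2).choose (d - 1) * (d + l - 2).choose (d - 1)

/-- The convolution `U * V = {(k + l', k' + l) : (k,l) ∈ U, (k',l') ∈ V}`. -/
def convSet (U V : Finset (ℕ × ℕ)) : Finset (ℕ × ℕ) :=
  (U ×ˢ V).image fun p => (p.1.1 + p.2.2, p.2.1 + p.1.2)

/-- `X` is an `S`-code: it has an annihilator polynomial supported on monomials
`x^k * conj x^l` with `(k,l) ∈ S`. -/
def IsCode (d : ℕ) (X : Finset (Fin d → ℂ)) (S : Finset (ℕ × ℕ)) : Prop :=
  ∃ c : ℕ × ℕ → ℝ,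
    (∀ α ∈ innerSet X, ∑ kl ∈ S, (c kl : ℂ) * α ^ kl.1 * ((starRingEnd ℂ) α) ^ kl.2 = 0) ∧
    0 < ∑ kl ∈ S, c kl

open scoped Classical

/-- The Hermitian matrix `A = I + (i/√(2d−1))·C` built from a real matrix `C`. -/
noncomputable def confGram (d : ℕ) (C : Matrix (Fin (2 * d)) (Fin (2 * d)) ℝ) :
    Matrix (Fin (2 * d)) (Fin (2 * d)) ℂ :=
  1 + (Complex.I / (Real.sqrt (2 * (d : ℝ) - 1) : ℂ)) • C.map (fun r => (r : ℂ))

section facts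
variable {d : ℕ} (hd : 1 ≤ d) (C : Matrix (Fin (2 * d)) (Fin (2 * d)) ℝ)

lemma sub_one_pos (hd : 1 ≤ d) : (0:ℝ) < 2 * (d:ℝ) - 1 := by
  have : (1:ℝ) ≤ d := by exact_mod_cast hd
  linarith

lemma sqrt_pos' (hd : 1 ≤ d) : (0:ℝ) < Real.sqrt (2 * (d:ℝ) - 1) :=
  Real.sqrt_pos.mpr (sub_one_pos hd)

lemma c_sq (hd : 1 ≤ d) :
    (Complex.I / (Real.sqrt (2 * (d : ℝ) - 1) : ℂ)) ^ 2 * ((2 * (d:ℝ) - 1 : ℝ) : ℂ) = -1 := by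
  have h1 : ((Real.sqrt (2 * (d:ℝ) - 1) : ℝ) : ℂ) ^ 2 = ((2 * (d:ℝ) - 1 : ℝ) : ℂ) := by
    rw [← Complex.ofReal_pow, Real.sq_sqrt (le_of_lt (sub_one_pos hd))]
  have hne : ((Real.sqrt (2 * (d:ℝ) - 1) : ℝ) : ℂ) ≠ 0 := by
    exact_mod_cast (sqrt_pos' hd).ne'
  field_simp [div_pow]
  rw [h1]
  ring_nf
  push_cast
  linear_combination (2 * (d:ℂ) - 1) * Complex.I_sq

lemma conj_c : (starRingEnd ℂ) (Complex.I / (Real.sqrt (2 * (d : ℝ) - 1) : ℂ))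
    = -(Complex.I / (Real.sqrt (2 * (d : ℝ) - 1) : ℂ)) := by
  rw [map_div₀, Complex.conj_I, Complex.conj_ofReal, neg_div]

lemma confGram_apply (j k : Fin (2*d)) :
    confGram d C j k = (if j = k then 1 else 0) +
      (Complex.I / (Real.sqrt (2 * (d : ℝ) - 1) : ℂ)) * (C j k : ℂ) := by
  simp [confGram, Matrix.one_apply, Matrix.add_apply, Matrix.smul_apply, Matrix.map_apply,
    smul_eq_mul]

lemma confGram_diag (hdiag : ∀ j, C j j = 0) (j : Fin (2*d)) : confGram d C j j = 1 := by
  simp [confGram_apply, hdiag]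

lemma confGram_off (hdiag : ∀ j, C j j = 0) {j k : Fin (2*d)} (h : j ≠ k) :
    confGram d C j k = (Complex.I / (Real.sqrt (2 * (d : ℝ) - 1) : ℂ)) * (C j k : ℂ) := by
  simp [confGram_apply, h]

end facts

section facts2
variable {d : ℕ} {C : Matrix (Fin (2 * d)) (Fin (2 * d)) ℝ}

lemma confGram_herm (hskew : Cᵀ = -C) : (confGram d C).IsHermitian := by
  have hsk : ∀ i j, C j i = - C i j := by
    intro i j
    have := congrFun (congrFun hskew i) j
    simpa [Matrix.transpose_apply, Matrix.neg_apply] using this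
  unfold Matrix.IsHermitian
  ext i j
  rw [Matrix.conjTranspose_apply]
  simp only [confGram, Matrix.add_apply, Matrix.smul_apply, Matrix.one_apply, Matrix.map_apply,
    smul_eq_mul, Complex.star_def, map_add, _root_.map_mul, map_div₀, Complex.conj_I,
    Complex.conj_ofReal, apply_ite (starRingEnd ℂ), _root_.map_one, _root_.map_zero]
  rw [hsk i j]
  push_cast
  rcases eq_or_ne i j with rfl | hij
  · have h0 : C i i = 0 := by have := hsk i i; linarith
    simp [h0]
  · rw [if_neg hij, if_neg (Ne.symm hij)]
    ring

lemma Cmap_sq (hskew : Cᵀ = -C)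
    (hconf : C * Cᵀ = ((2 * (d : ℝ) - 1) : ℝ) • 1) :
    (C.map (fun r => (r:ℂ))) * (C.map (fun r => (r:ℂ)))
      = -(((2 * (d : ℝ) - 1) : ℝ) : ℂ) • 1 := by
  have hCC : C * C = -(((2 * (d : ℝ) - 1) : ℝ)) • 1 := by
    have := hconf
    rw [hskew, Matrix.mul_neg] at this
    have := congrArg Neg.neg this
    rw [neg_neg] at this
    rw [this, neg_smul]
  ext i j
  have h := congrFun (congrFun hCC i) j
  simp only [Matrix.mul_apply, Matrix.smul_apply, Matrix.neg_apply, Matrix.one_apply,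
    smul_eq_mul] at h ⊢
  simp only [Matrix.map_apply]
  have h2 : ((∑ x, C i x * C x j : ℝ) : ℂ)
      = ((-(2*(d:ℝ)-1) * if i = j then 1 else 0 : ℝ) : ℂ) := by rw [h]
  push_cast at h2
  rw [h2]
  rcases eq_or_ne i j with rfl | hij
  · simp
  · simp [hij]

lemma confGram_sq (hd : 1 ≤ d) (hskew : Cᵀ = -C)
    (hconf : C * Cᵀ = ((2 * (d : ℝ) - 1) : ℝ) • 1) :
    confGram d C * confGram d C = (2:ℂ) • confGram d C := by
  set c := Complex.I / (Real.sqrt (2 * (d : ℝ) - 1) : ℂ) with hc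
  set M := C.map (fun r => (r:ℂ)) with hM
  have hsq : M * M = -(((2 * (d : ℝ) - 1) : ℝ) : ℂ) • 1 := Cmap_sq hskew hconf
  have hc2 : c ^ 2 * ((2 * (d:ℝ) - 1 : ℝ) : ℂ) = -1 := c_sq hd
  have key : (c • M) * (c • M) = (1 : Matrix (Fin (2*d)) (Fin (2*d)) ℂ) := by
    rw [Matrix.smul_mul, Matrix.mul_smul, hsq, smul_smul, smul_smul]
    have : c * c * -(((2 * (d : ℝ) - 1) : ℝ) : ℂ) = 1 := by
      rw [← sq] at *
      linear_combination -hc2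
    rw [this, one_smul]
  have expand : confGram d C * confGram d C = (1 + c • M) + (c • M + 1) := by
    show (1 + c • M) * (1 + c • M) = _
    rw [add_mul, mul_add, mul_add, one_mul, one_mul, mul_one, key]
  rw [expand]
  show _ = (2:ℂ) • (1 + c • M)
  rw [two_smul]
  abel

lemma confGram_psd (hd : 1 ≤ d) (hskew : Cᵀ = -C)
    (hconf : C * Cᵀ = ((2 * (d : ℝ) - 1) : ℝ) • 1) :
    (confGram d C).PosSemidef := by
  refine Matrix.PosSemidef.of_dotProduct_mulVec_nonneg (confGram_herm hskew) fun v => ?_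
  have h1 := (Matrix.posSemidef_conjTranspose_mul_self (confGram d C)).dotProduct_mulVec_nonneg v
  rw [(confGram_herm hskew).eq, confGram_sq hd hskew hconf] at h1
  have h2 : dotProduct (star v) (((2:ℂ) • confGram d C) *ᵥ v)
      = 2 * dotProduct (star v) ((confGram d C) *ᵥ v) := by
    rw [Matrix.smul_mulVec, dotProduct_smul, smul_eq_mul]
  rw [h2] at h1
  have h3 : dotProduct (star v) ((confGram d C) *ᵥ v)
      = 2⁻¹ * (2 * dotProduct (star v) ((confGram d C) *ᵥ v)) := by ring
  rw [h3]
  refine mul_nonneg ?_ h1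
  have : (0:ℂ) ≤ ((2⁻¹:ℝ):ℂ) := by
    rw [Complex.zero_le_real]
    norm_num
  simpa using this

end facts2

section rank
variable {d : ℕ} {C : Matrix (Fin (2 * d)) (Fin (2 * d)) ℝ}

lemma confGram_trace (hdiag : ∀ j, C j j = 0) : (confGram d C).trace = ((2 * d : ℕ) : ℂ) := by
  unfold Matrix.trace
  have : ∀ j, (confGram d C).diag j = 1 := fun j => confGram_diag C hdiag j
  rw [Finset.sum_congr rfl fun j _ => this j]
  simp

lemma eigs_zero_or_two (hd : 1 ≤ d) (hskew : Cᵀ = -C)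
    (hconf : C * Cᵀ = ((2 * (d : ℝ) - 1) : ℝ) • 1) (i : Fin (2*d)) :
    (confGram_herm hskew).eigenvalues i = 0 ∨ (confGram_herm hskew).eigenvalues i = 2 := by
  set hA := confGram_herm hskew
  set lam := hA.eigenvalues i with hlam
  set v : Fin (2*d) → ℂ := ⇑(hA.eigenvectorBasis i) with hv
  have hv1 : confGram d C *ᵥ v = lam • v := hA.mulVec_eigenvectorBasis i
  have hv2 : (confGram d C * confGram d C) *ᵥ v = (lam * lam) • v := by
    rw [← Matrix.mulVec_mulVec, hv1, Matrix.mulVec_smul, hv1, smul_smul]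
  rw [confGram_sq hd hskew hconf] at hv2
  have hv3 : ((2:ℂ) • confGram d C) *ᵥ v = ((2:ℝ) * lam) • v := by
    rw [Matrix.smul_mulVec, hv1]
    funext t
    simp only [Pi.smul_apply, smul_eq_mul, Complex.real_smul]
    push_cast
    ring
  have hvne : v ≠ 0 := by
    have := hA.eigenvectorBasis.orthonormal.1 i
    intro h
    rw [hv] at h
    have : ‖hA.eigenvectorBasis i‖ = 1 := this
    rw [show hA.eigenvectorBasis i = 0 from PiLp.ext (congrFun h)] at this
    simp at this
  have heq : (lam * lam) • v = ((2:ℝ) * lam) • v := by rw [← hv2, hv3]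
  have : ((lam * lam) - (2 * lam)) • v = 0 := by
    rw [sub_smul, heq, sub_self]
  rcases smul_eq_zero.mp this with h | h
  · have : lam * lam - 2 * lam = 0 := h
    have : lam * (lam - 2) = 0 := by ring_nf; linarith [this]
    rcases mul_eq_zero.mp this with h' | h'
    · exact Or.inl h'
    · exact Or.inr (by linarith)
  · exact absurd h hvne

lemma sum_eigs (hd : 1 ≤ d) (hdiag : ∀ j, C j j = 0) (hskew : Cᵀ = -C) :
    ∑ i, (confGram_herm hskew (C := C)).eigenvalues i = 2 * d := by
  set hA := confGram_herm hskew
  have hst := hA.spectral_theorem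
  have htr : (confGram d C).trace
      = (Matrix.diagonal (RCLike.ofReal ∘ hA.eigenvalues) : Matrix (Fin (2*d)) (Fin (2*d)) ℂ).trace := by
    conv_lhs => rw [hst]
    rw [Unitary.conjStarAlgAut_apply]
    rw [Matrix.trace_mul_cycle]
    rw [show (star (hA.eigenvectorUnitary : Matrix (Fin (2*d)) (Fin (2*d)) ℂ)) *
          (hA.eigenvectorUnitary : Matrix (Fin (2*d)) (Fin (2*d)) ℂ) = 1 from
        Unitary.coe_star_mul_self hA.eigenvectorUnitary]
    rw [one_mul]
  rw [confGram_trace hdiag, Matrix.trace_diagonal] at htr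
  have : ((2 * d : ℕ) : ℂ) = ((∑ i, hA.eigenvalues i : ℝ) : ℂ) := by
    rw [htr]; push_cast; rfl
  have h2 : ((2 * d : ℕ) : ℝ) = ∑ i, hA.eigenvalues i := by exact_mod_cast this
  rw [← h2]; push_cast; ring

lemma confGram_rank (hd : 1 ≤ d) (hdiag : ∀ j, C j j = 0) (hskew : Cᵀ = -C)
    (hconf : C * Cᵀ = ((2 * (d : ℝ) - 1) : ℝ) • 1) :
    (confGram d C).rank = d := by
  set hA := confGram_herm hskew
  rw [hA.rank_eq_card_non_zero_eigs]
  rw [Fintype.card_subtype]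
  have hsum := sum_eigs hd hdiag hskew
  have hsplit : ∑ i, hA.eigenvalues i
      = ∑ i ∈ Finset.univ.filter (fun i => hA.eigenvalues i ≠ 0), hA.eigenvalues i := by
    rw [← Finset.sum_filter_add_sum_filter_not Finset.univ (fun i => hA.eigenvalues i ≠ 0)]
    have : ∑ i ∈ Finset.univ.filter (fun i => ¬ hA.eigenvalues i ≠ 0), hA.eigenvalues i = 0 := by
      apply Finset.sum_eq_zero
      intro i hi
      simpa using (Finset.mem_filter.mp hi).2
    rw [this, add_zero]
  have heach : ∀ i ∈ Finset.univ.filter (fun i => hA.eigenvalues i ≠ 0),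
      hA.eigenvalues i = 2 := by
    intro i hi
    rcases eigs_zero_or_two hd hskew hconf i with h | h
    · exact absurd h (Finset.mem_filter.mp hi).2
    · exact h
  rw [hsplit, Finset.sum_congr rfl heach, Finset.sum_const, nsmul_eq_mul] at hsum
  have : ((Finset.univ.filter (fun i => hA.eigenvalues i ≠ 0)).card : ℝ) = d := by
    linarith [hsum]
  exact_mod_cast this

end rank

section gram
variable {d : ℕ} {C : Matrix (Fin (2 * d)) (Fin (2 * d)) ℝ}

lemma trace_eq_zero_imp {m n : Type*} [Fintype m] [Fintype n] (M : Matrix m n ℂ)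
    (h : (Mᴴ * M).trace = 0) : M = 0 := by
  have h1 : ∑ i, ∑ j, Complex.normSq (M j i) = 0 := by
    have h2 : (Mᴴ * M).trace = ∑ i, ∑ j, ((Complex.normSq (M j i) : ℝ) : ℂ) := by
      unfold Matrix.trace
      simp only [Matrix.diag_apply, Matrix.mul_apply, Matrix.conjTranspose_apply,
        Complex.star_def, ← Complex.normSq_eq_conj_mul_self]
    rw [h2] at h
    have : ((∑ i, ∑ j, Complex.normSq (M j i) : ℝ) : ℂ) = 0 := by
      push_cast
      exact h
    exact_mod_cast this
  ext j i
  have hnn : ∀ i ∈ (Finset.univ : Finset n), (0:ℝ) ≤ ∑ j, Complex.normSq (M j i) :=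
    fun i _ => Finset.sum_nonneg fun j _ => Complex.normSq_nonneg _
  have hrow := (Finset.sum_eq_zero_iff_of_nonneg hnn).mp h1 i (Finset.mem_univ i)
  have hnn2 : ∀ j ∈ (Finset.univ : Finset m), (0:ℝ) ≤ Complex.normSq (M j i) :=
    fun j _ => Complex.normSq_nonneg _
  have := (Finset.sum_eq_zero_iff_of_nonneg hnn2).mp hrow j (Finset.mem_univ j)
  simpa using Complex.normSq_eq_zero.mp this

lemma confGram_transpose_mul_self (hd : 1 ≤ d) (hskew : Cᵀ = -C)
    (hconf : C * Cᵀ = ((2 * (d : ℝ) - 1) : ℝ) • 1) :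
    (confGram d C)ᵀ * confGram d C = 0 := by
  set c := Complex.I / (Real.sqrt (2 * (d : ℝ) - 1) : ℂ) with hc
  set M := C.map (fun r => (r:ℂ)) with hM
  have hsq : M * M = -(((2 * (d : ℝ) - 1) : ℝ) : ℂ) • 1 := Cmap_sq hskew hconf
  have hc2 : c ^ 2 * ((2 * (d:ℝ) - 1 : ℝ) : ℂ) = -1 := c_sq hd
  have key : (c • M) * (c • M) = (1 : Matrix (Fin (2*d)) (Fin (2*d)) ℂ) := by
    rw [Matrix.smul_mul, Matrix.mul_smul, hsq, smul_smul, smul_smul]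
    have : c * c * -(((2 * (d : ℝ) - 1) : ℝ) : ℂ) = 1 := by
      rw [← sq] at *
      linear_combination -hc2
    rw [this, one_smul]
  have hT : (confGram d C)ᵀ = 1 - c • M := by
    unfold confGram
    have hmapT : (C.map (fun r => (r:ℂ)))ᵀ = (Cᵀ).map (fun r => (r:ℂ)) := by
      ext i j; simp [Matrix.transpose_apply, Matrix.map_apply]
    rw [Matrix.transpose_add, Matrix.transpose_one, Matrix.transpose_smul, hmapT, hskew]
    have hneg : ((-C).map (fun r => (r:ℂ))) = -M := by
      ext i j; simp [hM, Matrix.map_apply]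
    rw [hneg, smul_neg]
    show 1 + -(c • M) = 1 - c • M
    abel
  rw [hT]
  show (1 - c • M) * (1 + c • M) = 0
  rw [sub_mul, mul_add, mul_add, key]
  simp only [one_mul, mul_one]
  abel

lemma gram_PP (x : Fin (2*d) → Fin d → ℂ)
    (hx : ∀ j k, cInner (x j) (x k) = confGram d C j k) :
    (Matrix.of fun j i => (starRingEnd ℂ) (x j i)) *
      (Matrix.of fun j i => (starRingEnd ℂ) (x j i))ᴴ = confGram d C := by
  ext j k
  rw [← hx j k]
  simp [Matrix.mul_apply, Matrix.conjTranspose_apply, cInner]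

lemma frame_eq (hd : 1 ≤ d) (hdiag : ∀ j, C j j = 0) (hskew : Cᵀ = -C)
    (hconf : C * Cᵀ = ((2 * (d : ℝ) - 1) : ℝ) • 1)
    (x : Fin (2*d) → Fin d → ℂ)
    (hx : ∀ j k, cInner (x j) (x k) = confGram d C j k) :
    ∀ i i', ∑ j, x j i * (starRingEnd ℂ) (x j i') = if i = i' then (2:ℂ) else 0 := by
  set P : Matrix (Fin (2*d)) (Fin d) ℂ := Matrix.of fun j i => (starRingEnd ℂ) (x j i) with hP
  have hPP : P * Pᴴ = confGram d C := gram_PP x hx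
  set N : Matrix (Fin d) (Fin d) ℂ := Pᴴ * P - (2:ℂ) • 1 with hN
  have hNh : Nᴴ = N := by
    rw [hN, Matrix.conjTranspose_sub, Matrix.conjTranspose_mul, Matrix.conjTranspose_conjTranspose,
      Matrix.conjTranspose_smul]
    congr 1
    rw [Matrix.conjTranspose_one]
    norm_num
  have htrPP : (Pᴴ * P).trace = ((2*d : ℕ) : ℂ) := by
    rw [Matrix.trace_mul_comm, hPP, confGram_trace hdiag]
  have htrPPPP : (Pᴴ * P * (Pᴴ * P)).trace = ((4*d : ℕ) : ℂ) := by
    have hassoc : Pᴴ * P * (Pᴴ * P) = Pᴴ * (P * Pᴴ) * P := by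
      simp only [Matrix.mul_assoc]
    rw [hassoc, hPP, Matrix.trace_mul_cycle, hPP, confGram_sq hd hskew hconf,
      Matrix.trace_smul, confGram_trace hdiag]
    push_cast
    simp only [smul_eq_mul]
    ring
  have htr0 : (Nᴴ * N).trace = 0 := by
    rw [hNh, hN]
    simp only [Matrix.sub_mul, Matrix.mul_sub, Matrix.smul_mul, Matrix.mul_smul,
      Matrix.one_mul, Matrix.mul_one, smul_smul, Matrix.trace_sub, Matrix.trace_smul,
      htrPPPP, htrPP, Matrix.trace_one]
    have hcard : (Fintype.card (Fin d) : ℂ) = (d : ℂ) := by simp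
    rw [hcard]
    simp only [smul_eq_mul]
    push_cast
    ring
  have hN0 : N = 0 := trace_eq_zero_imp N htr0
  intro i i'
  have := congrFun (congrFun hN0 i) i'
  rw [hN] at this
  simp only [Matrix.sub_apply, Matrix.smul_apply, Matrix.one_apply, Matrix.mul_apply,
    Matrix.conjTranspose_apply, Matrix.zero_apply, smul_eq_mul, sub_eq_zero] at this
  calc ∑ j, x j i * (starRingEnd ℂ) (x j i')
      = ∑ j, star (P j i) * P j i' := by
        apply Finset.sum_congr rfl
        intro j _
        simp [hP, Complex.star_def]
    _ = if i = i' then (2:ℂ) else 0 := by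
        rw [this]
        split <;> norm_num

lemma msum_eq (hd : 1 ≤ d) (hskew : Cᵀ = -C)
    (hconf : C * Cᵀ = ((2 * (d : ℝ) - 1) : ℝ) • 1)
    (x : Fin (2*d) → Fin d → ℂ)
    (hx : ∀ j k, cInner (x j) (x k) = confGram d C j k) :
    ∀ i i', ∑ j, x j i * x j i' = 0 := by
  set P : Matrix (Fin (2*d)) (Fin d) ℂ := Matrix.of fun j i => (starRingEnd ℂ) (x j i) with hP
  have hPP : P * Pᴴ = confGram d C := gram_PP x hx
  set N : Matrix (Fin d) (Fin d) ℂ := Pᴴ * Pᴴᵀ with hN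
  have hNh : Nᴴ = Pᵀ * P := by
    rw [hN, Matrix.conjTranspose_mul]
    congr 1
    · ext i j; simp [Matrix.conjTranspose_apply, Matrix.transpose_apply]
    · exact Matrix.conjTranspose_conjTranspose P
  have htr0 : (Nᴴ * N).trace = 0 := by
    rw [hNh, hN]
    have hassoc : Pᵀ * P * (Pᴴ * Pᴴᵀ) = Pᵀ * (P * Pᴴ) * Pᴴᵀ := by
      simp only [Matrix.mul_assoc]
    rw [hassoc, hPP, Matrix.trace_mul_cycle]
    have htt : Pᴴᵀ * Pᵀ = (P * Pᴴ)ᵀ := by rw [Matrix.transpose_mul]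
    rw [htt, hPP, confGram_transpose_mul_self hd hskew hconf, Matrix.trace_zero]
  have hN0 : N = 0 := trace_eq_zero_imp N htr0
  intro i i'
  have := congrFun (congrFun hN0 i) i'
  rw [hN] at this
  simp only [Matrix.mul_apply, Matrix.conjTranspose_apply, Matrix.transpose_apply,
    Matrix.zero_apply] at this
  rw [← this]
  congr 1
  funext j
  simp [hP]

end gram

section helpers
variable {d : ℕ}

lemma cInner_neg_left (x y : Fin d → ℂ) : cInner (-x) y = - cInner x y := by
  simp [cInner, ← Finset.sum_neg_distrib]

lemma cInner_neg_right (x y : Fin d → ℂ) : cInner x (-y) = - cInner x y := by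
  simp [cInner, ← Finset.sum_neg_distrib]

lemma prod_of_sum_zero {a : Fin d → ℕ} (h : ∑ i, a i = 0) (z : Fin d → ℂ) :
    ∏ i, z i ^ a i = 1 := by
  have : ∀ i, a i = 0 := by
    intro i
    exact Finset.sum_eq_zero_iff.mp h i (Finset.mem_univ i)
  simp [this]

lemma exp_one {a : Fin d → ℕ} (h : ∑ i, a i = 1) : ∃ i0, a = Pi.single i0 1 := by
  have h0 : ∃ i0, a i0 ≠ 0 := by
    by_contra h'
    push_neg at h'
    simp [h'] at h
  obtain ⟨i0, hi0⟩ := h0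
  have hsplit : a i0 + ∑ i ∈ Finset.univ.erase i0, a i = 1 := by
    rw [Finset.add_sum_erase Finset.univ a (Finset.mem_univ i0), h]
  have ha0 : a i0 = 1 := by omega
  have hrest : ∑ i ∈ Finset.univ.erase i0, a i = 0 := by omega
  refine ⟨i0, funext fun i => ?_⟩
  rcases eq_or_ne i i0 with rfl | hne
  · simp [ha0]
  · have : a i = 0 :=
      Finset.sum_eq_zero_iff.mp hrest i (Finset.mem_erase.mpr ⟨hne, Finset.mem_univ i⟩)
    simp [this, Pi.single_eq_of_ne hne]

lemma prod_single (z : Fin d → ℂ) (i0 : Fin d) :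
    ∏ i, z i ^ (Pi.single i0 1 : Fin d → ℕ) i = z i0 := by
  rw [Finset.prod_eq_single i0]
  · simp
  · intro i _ hne
    simp [Pi.single_eq_of_ne hne]
  · simp

lemma exp_two {a : Fin d → ℕ} (h : ∑ i, a i = 2) :
    ∃ i0 i1, ∀ z : Fin d → ℂ, ∏ i, z i ^ a i = z i0 * z i1 := by
  have h0 : ∃ i0, a i0 ≠ 0 := by
    by_contra h'
    push_neg at h'
    simp [h'] at h
  obtain ⟨i0, hi0⟩ := h0
  set a' : Fin d → ℕ := Function.update a i0 (a i0 - 1) with ha'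
  have hsplit : a i0 + ∑ i ∈ Finset.univ.erase i0, a i = 2 := by
    rw [Finset.add_sum_erase Finset.univ a (Finset.mem_univ i0), h]
  have hsum' : ∑ i, a' i = 1 := by
    have h1 : a' i0 + ∑ i ∈ Finset.univ.erase i0, a' i = ∑ i, a' i := by
      rw [Finset.add_sum_erase Finset.univ a' (Finset.mem_univ i0)]
    have h2 : ∑ i ∈ Finset.univ.erase i0, a' i = ∑ i ∈ Finset.univ.erase i0, a i := by
      apply Finset.sum_congr rfl
      intro i hi
      rw [ha', Function.update_of_ne (Finset.mem_erase.mp hi).1]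
    have h3 : a' i0 = a i0 - 1 := by rw [ha', Function.update_self]
    omega
  obtain ⟨i1, hi1⟩ := exp_one hsum'
  refine ⟨i0, i1, fun z => ?_⟩
  have key : ∏ i, z i ^ a i = z i0 * ∏ i, z i ^ a' i := by
    rw [← Finset.mul_prod_erase Finset.univ (fun i => z i ^ a i) (Finset.mem_univ i0),
        ← Finset.mul_prod_erase Finset.univ (fun i => z i ^ a' i) (Finset.mem_univ i0)]
    have h2 : ∏ i ∈ Finset.univ.erase i0, z i ^ a' i = ∏ i ∈ Finset.univ.erase i0, z i ^ a i := by
      apply Finset.prod_congr rfl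
      intro i hi
      rw [ha', Function.update_of_ne (Finset.mem_erase.mp hi).1]
    rw [h2, ← mul_assoc]
    congr 1
    have h3 : a' i0 = a i0 - 1 := by rw [ha', Function.update_self]
    rw [h3, ← pow_succ']
    congr 1
    omega
  rw [key, hi1, prod_single]

lemma prod_neg (z : Fin d → ℂ) (a : Fin d → ℕ) :
    ∏ i, (-z) i ^ a i = (-1 : ℂ) ^ (∑ i, a i) * ∏ i, z i ^ a i := by
  have : ∀ i, (-z) i ^ a i = (-1 : ℂ) ^ a i * z i ^ a i := by
    intro i
    rw [Pi.neg_apply, neg_pow]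
  rw [Finset.prod_congr rfl fun i _ => this i, Finset.prod_mul_distrib,
    Finset.prod_pow_eq_pow_sum]

lemma monomialAvg_ne {a b : Fin d → ℕ} (h : a ≠ b) : monomialAvg d a b = 0 := if_neg h

lemma monomialAvg_zero {a b : Fin d → ℕ} (hd : 1 ≤ d) (ha : ∑ i, a i = 0)
    (hb : ∑ i, b i = 0) : monomialAvg d a b = 1 := by
  have ha' : a = fun _ => 0 := funext fun i => Finset.sum_eq_zero_iff.mp ha i (Finset.mem_univ i)
  have hb' : b = fun _ => 0 := funext fun i => Finset.sum_eq_zero_iff.mp hb i (Finset.mem_univ i)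
  subst ha'
  rw [monomialAvg, if_pos hb'.symm]
  simp only [Nat.factorial_zero, Nat.cast_one, Finset.prod_const_one, mul_one,
    Finset.sum_const_zero, Nat.add_zero]
  exact div_self (by exact_mod_cast Nat.factorial_ne_zero (d-1))

lemma monomialAvg_single (hd : 1 ≤ d) (i0 : Fin d) :
    monomialAvg d (Pi.single i0 1) (Pi.single i0 1) = ((d : ℂ))⁻¹ := by
  rw [monomialAvg, if_pos rfl]
  have h1 : ∏ i, ((Nat.factorial ((Pi.single i0 1 : Fin d → ℕ) i)) : ℂ) = 1 := by
    apply Finset.prod_eq_one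
    intro i _
    rcases eq_or_ne i i0 with rfl | hne
    · simp
    · simp [Pi.single_eq_of_ne hne]
  have h2 : ∑ i, (Pi.single i0 1 : Fin d → ℕ) i = 1 := by
    rw [Finset.sum_eq_single i0]
    · simp
    · intro i _ hne
      simp [Pi.single_eq_of_ne hne]
    · simp
  rw [h1, h2, mul_one]
  have h3 : d + 1 - 1 = d := by omega
  rw [h3]
  have h4 : Nat.factorial d = d * Nat.factorial (d - 1) := by
    conv_lhs => rw [show d = (d-1) + 1 by omega]
    rw [Nat.factorial_succ]
    congr 1
    omega
  rw [h4]
  push_cast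
  rw [div_mul_eq_div_div, div_right_comm,
    div_self (by exact_mod_cast Nat.factorial_ne_zero (d-1) : ((Nat.factorial (d-1) : ℂ)) ≠ 0),
    one_div]

end helpers

/-- from a `2d × 2d` skew-symmetric conference matrix `C`, the
matrix `A = I + (i/√(2d−1))C` is positive semidefinite of rank `d`, and any
Gram realization `x₁,…,x_{2d}` of `A` yields, together with the negatives, `4d`
pairwise distinct vectors forming a `{(k,l) : k+l ≤ 3}`-design with inner
product set `{i/√(2d−1), −i/√(2d−1), −1}` of cardinality `3`. -/
theorem stmt_18 {d : ℕ} (hd : 1 ≤ d) (C : Matrix (Fin (2 * d)) (Fin (2 * d)) ℝ)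
    (hdiag : ∀ j, C j j = 0)
    (hoff : ∀ j k, j ≠ k → C j k = 1 ∨ C j k = -1)
    (hskew : Cᵀ = -C)
    (hconf : C * Cᵀ = ((2 * (d : ℝ) - 1) : ℝ) • 1) :
    (confGram d C).PosSemidef ∧ (confGram d C).rank = d ∧
    ∀ x : Fin (2 * d) → Fin d → ℂ,
      (∀ j k, cInner (x j) (x k) = confGram d C j k) →
      Function.Injective (fun p : Fin (2 * d) × Bool =>
        if p.2 then x p.1 else -(x p.1)) ∧
      IsDesign d ((Finset.univ.image x) ∪ (Finset.univ.image fun j => -(x j)))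
        (((Finset.range 4) ×ˢ (Finset.range 4)).filter fun p => p.1 + p.2 ≤ 3) ∧
      innerSet ((Finset.univ.image x) ∪ (Finset.univ.image fun j => -(x j))) =
        {Complex.I / (Real.sqrt (2 * (d : ℝ) - 1) : ℂ),
         -(Complex.I / (Real.sqrt (2 * (d : ℝ) - 1) : ℂ)), -1} ∧
      (innerSet ((Finset.univ.image x) ∪ (Finset.univ.image fun j => -(x j)))).card = 3 := by
  have hpsd := confGram_psd hd hskew hconf
  have hrank := confGram_rank hd hdiag hskew hconf
  refine ⟨hpsd, hrank, ?_⟩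
  intro x hx
  set c : ℂ := Complex.I / (Real.sqrt (2 * (d : ℝ) - 1) : ℂ) with hcdef
  have hs0 : (0:ℝ) < Real.sqrt (2 * (d:ℝ) - 1) := sqrt_pos' hd
  have hcform : c = Complex.I * (((Real.sqrt (2 * (d:ℝ) - 1))⁻¹ : ℝ) : ℂ) := by
    rw [hcdef, div_eq_mul_inv]
    push_cast
    rfl
  have hcre : c.re = 0 := by rw [hcform]; simp
  have hcim : c.im = (Real.sqrt (2 * (d:ℝ) - 1))⁻¹ := by rw [hcform]; simp
  have hcim0 : c.im ≠ 0 := by rw [hcim]; exact inv_ne_zero hs0.ne'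
  have hG : ∀ j k, cInner (x j) (x k) = (if j = k then 1 else 0) + c * (C j k : ℂ) := by
    intro j k
    rw [hx]
    exact confGram_apply C j k
  have hGjj : ∀ j, cInner (x j) (x j) = 1 := fun j => by
    rw [hG]; simp [hdiag]
  have hGjk : ∀ j k, j ≠ k → cInner (x j) (x k) = c * (C j k : ℂ) := fun j k h => by
    rw [hG]; simp [h]
  set f : Fin (2*d) × Bool → (Fin d → ℂ) := fun p => if p.2 then x p.1 else -(x p.1) with hfdef
  have hfval : ∀ p q, cInner (f p) (f q)
      = ((if p.2 then 1 else -1) * (if q.2 then 1 else -1) : ℂ) * cInner (x p.1) (x q.1) := by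
    intro p q
    rcases p with ⟨j, bp⟩
    rcases q with ⟨k, bq⟩
    cases bp <;> cases bq <;>
      simp [hfdef, cInner_neg_left, cInner_neg_right]
  have hself : ∀ p, cInner (f p) (f p) = 1 := by
    intro p
    rw [hfval]
    rcases p with ⟨j, bp⟩
    cases bp <;> simp [hGjj]
  have hre_ne_one : ∀ v : ℂ, v.re = 0 → v ≠ 1 := by
    intro v hv h
    rw [h] at hv
    simp at hv
  have hCre : ∀ (j k : Fin (2*d)), j ≠ k → ∀ ε : ℂ, (ε = 1 ∨ ε = -1) →
      ε * cInner (x j) (x k) ≠ 1 := by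
    intro j k hne ε hε
    rcases hoff j k hne with h | h
    · have hval : cInner (x j) (x k) = c := by rw [hGjk j k hne, h]; norm_num
      rcases hε with rfl | rfl
      · rw [hval, one_mul]; exact hre_ne_one c hcre
      · rw [hval, neg_one_mul]; exact hre_ne_one _ (by simp [hcre])
    · have hval : cInner (x j) (x k) = -c := by rw [hGjk j k hne, h]; push_cast; ring
      rcases hε with rfl | rfl
      · rw [hval, one_mul]; exact hre_ne_one _ (by simp [hcre])
      · rw [hval, neg_one_mul, neg_neg]; exact hre_ne_one c hcre
  have hinj : Function.Injective f := by
    intro p q hpq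
    have h1 : cInner (f p) (f q) = 1 := by rw [hpq]; exact hself q
    rcases p with ⟨j, bp⟩
    rcases q with ⟨k, bq⟩
    rcases eq_or_ne j k with rfl | hjk
    · by_cases hb : bp = bq
      · rw [hb]
      · exfalso
        rw [hfval] at h1
        have hsgn : ((if (j,bp).2 then 1 else -1) * (if (j,bq).2 then 1 else -1) : ℂ) = -1 := by
          cases bp <;> cases bq <;> simp at hb ⊢
        rw [hsgn, hGjj] at h1
        norm_num at h1
    · exfalso
      rw [hfval] at h1
      exact hCre j k hjk _ (by cases bp <;> cases bq <;> norm_num) h1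
  have hxinj : Function.Injective x := by
    intro j k h
    have h2 : f (j, true) = f (k, true) := by simpa [hfdef] using h
    exact (Prod.ext_iff.mp (hinj h2)).1
  have hninj : Function.Injective (fun j : Fin (2*d) => -(x j)) := by
    intro j k h
    have h2 : f (j, false) = f (k, false) := by simpa [hfdef] using h
    exact (Prod.ext_iff.mp (hinj h2)).1
  have hdisj : Disjoint (Finset.univ.image x) (Finset.univ.image fun j => -(x j)) := by
    rw [Finset.disjoint_left]
    rintro a ha hb
    obtain ⟨j, -, rfl⟩ := Finset.mem_image.mp ha
    obtain ⟨k, -, hk⟩ := Finset.mem_image.mp hb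
    have h2 : f (k, false) = f (j, true) := by simpa [hfdef] using hk
    have := hinj h2
    simp at this
  set X := (Finset.univ.image x) ∪ (Finset.univ.image fun j => -(x j)) with hXdef
  have hcard : X.card = 4 * d := by
    rw [hXdef, Finset.card_union_of_disjoint hdisj, Finset.card_image_of_injective _ hxinj,
      Finset.card_image_of_injective _ hninj]
    simp only [Finset.card_univ, Fintype.card_fin]
    omega
  have hsum : ∀ g : (Fin d → ℂ) → ℂ, ∑ z ∈ X, g z = ∑ j, g (x j) + ∑ j, g (-(x j)) := by
    intro g
    rw [hXdef, Finset.sum_union hdisj, Finset.sum_image (fun a _ b _ h => hxinj h),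
      Finset.sum_image (fun a _ b _ h => hninj h)]
  have hxmem : ∀ j, x j ∈ X := fun j =>
    Finset.mem_union_left _ (Finset.mem_image_of_mem x (Finset.mem_univ j))
  have hnxmem : ∀ j, -(x j) ∈ X := fun j =>
    Finset.mem_union_right _ (Finset.mem_image_of_mem _ (Finset.mem_univ j))
  have hskew' : ∀ j k, C k j = - C j k := by
    intro j k
    have := congrFun (congrFun hskew j) k
    simpa using this
  have hmemInner : ∀ u v : Fin d → ℂ, u ∈ X → v ∈ X → u ≠ v → cInner u v ∈ innerSet X := by
    intro u v hu hv huv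
    exact Finset.mem_image.mpr
      ⟨(u,v), Finset.mem_filter.mpr ⟨Finset.mem_product.mpr ⟨hu, hv⟩, huv⟩, rfl⟩
  have hIS : innerSet X = {c, -c, -1} := by
    apply Finset.Subset.antisymm
    · intro α hα
      obtain ⟨p, hp, rfl⟩ := Finset.mem_image.mp hα
      obtain ⟨hpX, hne⟩ := Finset.mem_filter.mp hp
      obtain ⟨h1, h2⟩ := Finset.mem_product.mp hpX
      have hrep : ∀ z ∈ X, ∃ pp : Fin (2*d) × Bool, z = f pp := by
        intro z hz
        rcases Finset.mem_union.mp hz with h | h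
        · obtain ⟨j, -, rfl⟩ := Finset.mem_image.mp h
          exact ⟨(j, true), by simp [hfdef]⟩
        · obtain ⟨j, -, rfl⟩ := Finset.mem_image.mp h
          exact ⟨(j, false), by simp [hfdef]⟩
      obtain ⟨⟨j, bj⟩, hj⟩ := hrep p.1 h1
      obtain ⟨⟨k, bk⟩, hk⟩ := hrep p.2 h2
      rw [hj, hk, hfval]
      rcases eq_or_ne j k with rfl | hjk
      · have hbb : bj ≠ bk := by
          intro h
          apply hne
          rw [hj, hk, h]
        have hsgn : ((if ((j, bj) : Fin (2*d) × Bool).2 then 1 else -1) *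
            (if ((j, bk) : Fin (2*d) × Bool).2 then 1 else -1) : ℂ) = -1 := by
          cases bj <;> cases bk <;> first | exact absurd rfl hbb | norm_num
        rw [hsgn, hGjj]
        simp
      · show _ * cInner (x j) (x k) ∈ _
        rw [hGjk j k hjk]
        rcases hoff j k hjk with h | h <;> rw [h] <;> cases bj <;> cases bk <;>
          · push_cast
            ring_nf
            simp [Finset.mem_insert]
    · intro α hα
      simp only [Finset.mem_insert, Finset.mem_singleton] at hα
      have hj0lt : 0 < 2*d := by omega
      have hj1lt : 1 < 2*d := by omega
      set j0 : Fin (2*d) := ⟨0, hj0lt⟩ with hj0def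
      set j1 : Fin (2*d) := ⟨1, hj1lt⟩ with hj1def
      have hj01 : j0 ≠ j1 := by
        intro h
        have := congrArg Fin.val h
        rw [hj0def, hj1def] at this
        simp at this
      rcases hα with rfl | rfl | rfl
      · rcases hoff j0 j1 hj01 with h | h
        · have hv : cInner (x j0) (x j1) = c := by rw [hGjk _ _ hj01, h]; norm_num
          rw [← hv]
          exact hmemInner _ _ (hxmem j0) (hxmem j1) (fun hcontra => hj01 (hxinj hcontra))
        · have hC10 : C j1 j0 = 1 := by rw [hskew' j0 j1, h]; norm_num
          have hv : cInner (x j1) (x j0) = c := by rw [hGjk _ _ hj01.symm, hC10]; norm_num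
          rw [← hv]
          exact hmemInner _ _ (hxmem j1) (hxmem j0) (fun hcontra => hj01 (hxinj hcontra).symm)
      · rcases hoff j0 j1 hj01 with h | h
        · have hC10 : C j1 j0 = -1 := by rw [hskew' j0 j1, h]
          have hv : cInner (x j1) (x j0) = -c := by
            rw [hGjk _ _ hj01.symm, hC10]; push_cast; ring
          rw [← hv]
          exact hmemInner _ _ (hxmem j1) (hxmem j0) (fun hcontra => hj01 (hxinj hcontra).symm)
        · have hv : cInner (x j0) (x j1) = -c := by rw [hGjk _ _ hj01, h]; push_cast; ring
          rw [← hv]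
          exact hmemInner _ _ (hxmem j0) (hxmem j1) (fun hcontra => hj01 (hxinj hcontra))
      · have hv : cInner (x j0) (-(x j0)) = -1 := by rw [cInner_neg_right, hGjj]
        rw [← hv]
        refine hmemInner _ _ (hxmem j0) (hnxmem j0) ?_
        intro hcontra
        have h2 : f (j0, true) = f (j0, false) := by simpa [hfdef] using hcontra
        have := hinj h2
        simp at this
  have hcnec : c ≠ -c := by
    intro h
    have h2 := congrArg Complex.im h
    rw [Complex.neg_im] at h2
    apply hcim0
    linarith
  have hcne1 : c ≠ -1 := by
    intro h
    have h2 := congrArg Complex.re h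
    rw [hcre] at h2
    norm_num at h2
  have hncne1 : -c ≠ -1 := by
    intro h
    have h2 := congrArg Complex.re h
    rw [Complex.neg_re, hcre] at h2
    norm_num at h2
  refine ⟨hinj, ?_, hIS, ?_⟩
  swap
  · rw [hIS]
    rw [Finset.card_insert_of_notMem (by simp [hcnec, hcne1]),
      Finset.card_insert_of_notMem (by simp [hncne1]), Finset.card_singleton]
  · -- design
    intro kl hkl a b ha hb
    obtain ⟨k, l⟩ := kl
    simp only [Finset.mem_filter, Finset.mem_product, Finset.mem_range] at hkl
    simp only at ha hb
    have hkl3 : k + l ≤ 3 := hkl.2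
    rw [hcard]
    have hterm : ∀ z : Fin d → ℂ,
        (∏ i, (-z) i ^ a i) * ∏ i, ((starRingEnd ℂ) ((-z) i)) ^ b i
        = (-1:ℂ)^(k+l) * ((∏ i, z i ^ a i) * ∏ i, ((starRingEnd ℂ) (z i)) ^ b i) := by
      intro z
      have h1 := prod_neg z a
      have h2 : ∏ i, ((starRingEnd ℂ) ((-z) i)) ^ b i
          = (-1:ℂ)^(∑ i, b i) * ∏ i, ((starRingEnd ℂ) (z i)) ^ b i := by
        have h3 := prod_neg (fun i => (starRingEnd ℂ) (z i)) b
        have h4 : ∀ i, ((starRingEnd ℂ) ((-z) i)) ^ b i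
            = ((-(fun i => (starRingEnd ℂ) (z i))) i) ^ b i := by
          intro i
          simp
        rw [Finset.prod_congr rfl fun i _ => h4 i, h3]
      rw [h1, h2, ha, hb]
      rw [pow_add]
      ring
    have hLHS : ∑ z ∈ X, (∏ i, (z i) ^ (a i)) * ∏ i, ((starRingEnd ℂ) (z i)) ^ (b i)
        = (1 + (-1:ℂ)^(k+l)) *
          ∑ j, (∏ i, (x j i) ^ (a i)) * ∏ i, ((starRingEnd ℂ) (x j i)) ^ (b i) := by
      rw [hsum]
      have : ∀ j : Fin (2*d), (∏ i, ((-(x j)) i) ^ (a i)) *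
            ∏ i, ((starRingEnd ℂ) ((-(x j)) i)) ^ (b i)
          = (-1:ℂ)^(k+l) * ((∏ i, (x j i) ^ (a i)) * ∏ i, ((starRingEnd ℂ) (x j i)) ^ (b i)) :=
        fun j => hterm (x j)
      rw [Finset.sum_congr rfl fun j _ => this j, ← Finset.mul_sum]
      ring
    by_cases hpar : (k + l) % 2 = 1
    · have hodd : Odd (k + l) := Nat.odd_iff.mpr hpar
      have hfac : (1 + (-1:ℂ)^(k+l)) = 0 := by
        rw [Odd.neg_one_pow hodd]
        ring
      have hab : a ≠ b := by
        intro h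
        rw [h] at ha
        omega
      rw [hLHS, hfac, zero_mul, monomialAvg_ne hab, mul_zero]
    · have hcases : (k = 0 ∧ l = 0) ∨ (k = 1 ∧ l = 1) ∨ (k = 2 ∧ l = 0) ∨ (k = 0 ∧ l = 2) := by
        omega
      rcases hcases with ⟨rfl, rfl⟩ | ⟨rfl, rfl⟩ | ⟨rfl, rfl⟩ | ⟨rfl, rfl⟩
      · -- (0,0)
        have hone : ∀ j : Fin (2*d), (∏ i, (x j i) ^ (a i)) *
            ∏ i, ((starRingEnd ℂ) (x j i)) ^ (b i) = 1 := by
          intro j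
          rw [prod_of_sum_zero ha, prod_of_sum_zero hb, mul_one]
        rw [hLHS, Finset.sum_congr rfl fun j _ => hone j, monomialAvg_zero hd ha hb]
        simp only [Finset.sum_const, Finset.card_univ, Fintype.card_fin, nsmul_eq_mul, mul_one]
        push_cast
        ring
      · -- (1,1)
        obtain ⟨i0, rfl⟩ := exp_one ha
        obtain ⟨i1, rfl⟩ := exp_one hb
        have hterm1 : ∀ j : Fin (2*d),
            (∏ i, (x j i) ^ ((Pi.single i0 1 : Fin d → ℕ) i)) *
              ∏ i, ((starRingEnd ℂ) (x j i)) ^ ((Pi.single i1 1 : Fin d → ℕ) i)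
            = x j i0 * (starRingEnd ℂ) (x j i1) := by
          intro j
          rw [prod_single (x j) i0, prod_single (fun i => (starRingEnd ℂ) (x j i)) i1]
        rw [hLHS, Finset.sum_congr rfl fun j _ => hterm1 j,
          frame_eq hd hdiag hskew hconf x hx i0 i1]
        rcases eq_or_ne i0 i1 with rfl | hne
        · rw [if_pos rfl, monomialAvg_single hd i0]
          have hd0 : (d:ℂ) ≠ 0 := Nat.cast_ne_zero.mpr (by omega)
          push_cast
          field_simp
          ring
        · have hab : (Pi.single i0 1 : Fin d → ℕ) ≠ Pi.single i1 1 := by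
            intro h
            have := congrFun h i0
            rw [Pi.single_eq_same, Pi.single_eq_of_ne hne] at this
            exact one_ne_zero this
          rw [if_neg hne, monomialAvg_ne hab, mul_zero, mul_zero]
      · -- (2,0)
        obtain ⟨i0, i1, hprod⟩ := exp_two ha
        have hterm1 : ∀ j : Fin (2*d), (∏ i, (x j i) ^ (a i)) *
            ∏ i, ((starRingEnd ℂ) (x j i)) ^ (b i) = x j i0 * x j i1 := by
          intro j
          rw [hprod (x j), prod_of_sum_zero hb, mul_one]
        have hab : a ≠ b := by
          intro h
          rw [h] at ha
          omega
        rw [hLHS, Finset.sum_congr rfl fun j _ => hterm1 j,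
          msum_eq hd hskew hconf x hx i0 i1, mul_zero, monomialAvg_ne hab, mul_zero]
      · -- (0,2)
        obtain ⟨i0, i1, hprod⟩ := exp_two hb
        have hterm1 : ∀ j : Fin (2*d), (∏ i, (x j i) ^ (a i)) *
            ∏ i, ((starRingEnd ℂ) (x j i)) ^ (b i)
            = (starRingEnd ℂ) (x j i0 * x j i1) := by
          intro j
          rw [prod_of_sum_zero ha, one_mul, hprod (fun i => (starRingEnd ℂ) (x j i)), _root_.map_mul]
        have hab : a ≠ b := by
          intro h
          rw [h] at ha
          omega
        have hzero : ∑ j, (starRingEnd ℂ) (x j i0 * x j i1) = 0 := by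
          rw [← map_sum, msum_eq hd hskew hconf x hx i0 i1, map_zero]
        rw [hLHS, Finset.sum_congr rfl fun j _ => hterm1 j, hzero, mul_zero,
          monomialAvg_ne hab, mul_zero]
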